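/- Let σ and α be permutations of {1, ..., n} and let (i,j,k) be a 3-cycle of α. If κ(σ, α·(i,k,j)) = κ(σ, α) + 2, then i, j, and k lie in three distinct cycles of σ. -/

import Mathlib

/-- `κ(σ, β)`: the number of orbits of the subgroup generated by `σ` and `β`
acting on `{1, …, n}`. -/
noncomputable def kappa {n : ℕ} (σ β : Equiv.Perm (Fin n)) : ℕ :=
  Nat.card (MulAction.orbitRel.Quotient
    (Subgroup.closure ({σ, β} : Set (Equiv.Perm (Fin n)))) (Fin n))

/-- If `(i,j,k)` is a 3-cycle of `α` and replacing it by three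
fixed points (passing to `α' = α·(i,k,j)`) increases the number of orbits by
exactly `2`, then `i`, `j`, `k` lie in three distinct cycles of `σ`. -/
theorem double_bridge_is_regular {n : ℕ} (σ α α' : Equiv.Perm (Fin n))
    (i j k : Fin n) (hij : i ≠ j) (hik : i ≠ k) (hjk : j ≠ k)
    (hcyc : α i = j ∧ α j = k ∧ α k = i)
    (hα' : α' i = i ∧ α' j = j ∧ α' k = k ∧
      ∀ x, x ≠ i → x ≠ j → x ≠ k → α' x = α x)
    (hκ : kappa σ α' = kappa σ α + 2) :
    ¬ σ.SameCycle i j ∧ ¬ σ.SameCycle i k ∧ ¬ σ.SameCycle j k := by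
  classical
  obtain ⟨hai, haj, hak⟩ := hcyc
  obtain ⟨h1, h2, h3, h4⟩ := hα'
  set H := Subgroup.closure ({σ, α'} : Set (Equiv.Perm (Fin n))) with hH
  set K := Subgroup.closure ({σ, α} : Set (Equiv.Perm (Fin n))) with hK
  set s : Setoid (Fin n) := MulAction.orbitRel H (Fin n) with hs
  set s' : Setoid (Fin n) := MulAction.orbitRel K (Fin n) with hs'
  let S : Fin n → Fin n → Prop := fun x y => s x y
  let S' : Fin n → Fin n → Prop := fun x y => s' x y
  have Srefl : ∀ x, S x x := fun x => s.refl x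
  have Ssymm : ∀ {x y}, S x y → S y x := fun h => s.symm h
  have Strans : ∀ {x y z}, S x y → S y z → S x z := fun h h' => s.trans h h'
  have S'refl : ∀ x, S' x x := fun x => s'.refl x
  have S'symm : ∀ {x y}, S' x y → S' y x := fun h => s'.symm h
  have S'trans : ∀ {x y z}, S' x y → S' y z → S' x z := fun h h' => s'.trans h h'
  have memσH : σ ∈ H := Subgroup.subset_closure (by simp)
  have memα'H : α' ∈ H := Subgroup.subset_closure (by simp)
  have memσK : σ ∈ K := Subgroup.subset_closure (by simp)
  have memαK : α ∈ K := Subgroup.subset_closure (by simp)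
  have SmoveH : ∀ g ∈ H, ∀ x, S (g x) x := by
    intro g hg x
    show (MulAction.orbitRel H (Fin n)) (g x) x
    rw [MulAction.orbitRel_apply]
    exact ⟨⟨g, hg⟩, rfl⟩
  have SmoveK : ∀ g ∈ K, ∀ x, S' (g x) x := by
    intro g hg x
    show (MulAction.orbitRel K (Fin n)) (g x) x
    rw [MulAction.orbitRel_apply]
    exact ⟨⟨g, hg⟩, rfl⟩
  -- H-orbits refine K-orbits
  have hHmove : ∀ g ∈ H, ∀ x, S' (g x) x := by
    intro g hg
    induction hg using Subgroup.closure_induction with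
    | mem g hg =>
      rcases hg with rfl | h
      · exact fun x => SmoveK _ memσK x
      · simp only [Set.mem_singleton_iff] at h
        subst h
        intro x
        by_cases hxi : x = i
        · rw [hxi, h1]
        by_cases hxj : x = j
        · rw [hxj, h2]
        by_cases hxk : x = k
        · rw [hxk, h3]
        · rw [h4 x hxi hxj hxk]; exact SmoveK _ memαK x
    | one => intro x; simp only [Equiv.Perm.coe_one, id_eq]; exact S'refl x
    | mul g h hg hh pg ph =>
      intro x
      have : (g * h) x = g (h x) := rfl
      rw [this]
      exact S'trans (pg (h x)) (ph x)
    | inv g hg pg =>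
      intro x
      have := pg (g⁻¹ x)
      rw [show g (g⁻¹ x) = x from g.apply_symm_apply x] at this
      exact S'symm this
  have StoS' : ∀ {x y}, S x y → S' x y := by
    intro x y hxy
    have : x ∈ MulAction.orbit H y := MulAction.orbitRel_apply.mp hxy
    obtain ⟨g, hg⟩ := this
    rw [← hg]
    exact hHmove (g : Equiv.Perm (Fin n)) g.2 y
  -- the "T" predicate and the key structure lemma for K-orbits
  let T : Fin n → Prop := fun x => S x i ∨ S x j ∨ S x k
  have Tcomp : ∀ {a b}, S a b → T b → T a := by
    rintro a b hab (h | h | h)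
    · exact Or.inl (Strans hab h)
    · exact Or.inr (Or.inl (Strans hab h))
    · exact Or.inr (Or.inr (Strans hab h))
  have hKmove : ∀ g ∈ K, ∀ x, S (g x) x ∨ (T (g x) ∧ T x) := by
    intro g hg
    induction hg using Subgroup.closure_induction with
    | mem g hg =>
      rcases hg with rfl | h
      · exact fun x => Or.inl (SmoveH _ memσH x)
      · simp only [Set.mem_singleton_iff] at h
        subst h
        intro x
        by_cases hxi : x = i
        · rw [hxi, hai]
          exact Or.inr ⟨Or.inr (Or.inl (Srefl j)), Or.inl (Srefl i)⟩
        by_cases hxj : x = j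
        · rw [hxj, haj]
          exact Or.inr ⟨Or.inr (Or.inr (Srefl k)), Or.inr (Or.inl (Srefl j))⟩
        by_cases hxk : x = k
        · rw [hxk, hak]
          exact Or.inr ⟨Or.inl (Srefl i), Or.inr (Or.inr (Srefl k))⟩
        · rw [← h4 x hxi hxj hxk]
          exact Or.inl (SmoveH _ memα'H x)
    | one => intro x; exact Or.inl (by simpa using Srefl x)
    | mul g h hg hh pg ph =>
      intro x
      have hgh : (g * h) x = g (h x) := rfl
      rw [hgh]
      rcases ph x with h1' | ⟨th, tx⟩
      · rcases pg (h x) with h2' | ⟨tg, th⟩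
        · exact Or.inl (Strans h2' h1')
        · exact Or.inr ⟨tg, Tcomp (Ssymm h1') th⟩
      · rcases pg (h x) with h2' | ⟨tg, _⟩
        · exact Or.inr ⟨Tcomp h2' th, tx⟩
        · exact Or.inr ⟨tg, tx⟩
    | inv g hg pg =>
      intro x
      rcases pg (g⁻¹ x) with h1' | ⟨ta, tb⟩
      · rw [show g (g⁻¹ x) = x from g.apply_symm_apply x] at h1'
        exact Or.inl (Ssymm h1')
      · rw [show g (g⁻¹ x) = x from g.apply_symm_apply x] at ta
        exact Or.inr ⟨tb, ta⟩
  have S'struct : ∀ {x y}, S' x y → S x y ∨ (T x ∧ T y) := by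
    intro x y hxy
    have : x ∈ MulAction.orbit K y := MulAction.orbitRel_apply.mp hxy
    obtain ⟨g, hg⟩ := this
    rw [← hg]
    exact hKmove (g : Equiv.Perm (Fin n)) g.2 y
  -- counting lemma: if two of the three special points are H-equivalent, contradiction
  have main : ∀ a b c : Fin n,
      (∀ x, (S x a ∨ S x b ∨ S x c) ↔ T x) → S a b → False := by
    intro a b c hiff Sab
    let f : Fin n → Option (Quotient s') := fun x =>
      if S x c then none else some (Quotient.mk'' x)
    have hwd : ∀ x y, (s : Setoid (Fin n)) x y → f x = f y := by
      intro x y hxy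
      have hxy' : S x y := hxy
      by_cases hc : S x c
      · have : S y c := Strans (Ssymm hxy') hc
        simp only [f, if_pos hc, if_pos this]
      · have : ¬ S y c := fun h => hc (Strans hxy' h)
        simp only [f, if_neg hc, if_neg this]
        exact congrArg some (Quotient.eq''.mpr (StoS' hxy'))
    let F : Quotient s → Option (Quotient s') := Quotient.lift f hwd
    have Finj : Function.Injective F := by
      intro q1 q2
      induction q1 using Quotient.ind
      induction q2 using Quotient.ind
      rename_i x y
      intro hFeq
      have hFeq : f x = f y := hFeq
      apply Quotient.sound
      show S x y
      by_cases hxc : S x c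
      · by_cases hyc : S y c
        · exact Strans hxc (Ssymm hyc)
        · simp only [f, if_pos hxc, if_neg hyc] at hFeq
          exact nomatch hFeq
      · by_cases hyc : S y c
        · simp only [f, if_neg hxc, if_pos hyc] at hFeq
          exact nomatch hFeq
        · simp only [f, if_neg hxc, if_neg hyc, Option.some.injEq] at hFeq
          have hS' : S' x y := Quotient.eq''.mp hFeq
          rcases S'struct hS' with h | ⟨tx, ty⟩
          · exact h
          · have hx : S x a := by
              rcases (hiff x).mpr tx with h | h | h
              · exact h
              · exact Strans h (Ssymm Sab)
              · exact absurd h hxc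
            have hy : S y a := by
              rcases (hiff y).mpr ty with h | h | h
              · exact h
              · exact Strans h (Ssymm Sab)
              · exact absurd h hyc
            exact Strans hx (Ssymm hy)
    have hcard : Nat.card (Quotient s) ≤ Nat.card (Option (Quotient s')) :=
      Nat.card_le_card_of_injective F Finj
    have hopt : Nat.card (Option (Quotient s')) = Nat.card (Quotient s') + 1 := by
      letI : Fintype (Quotient s') := Fintype.ofFinite _
      rw [Nat.card_eq_fintype_card, Nat.card_eq_fintype_card, Fintype.card_option]
    have hκ1 : kappa σ α' = Nat.card (Quotient s) := rfl
    have hκ2 : kappa σ α = Nat.card (Quotient s') := rfl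
    omega
  -- SameCycle implies S
  have sameS : ∀ {x y}, σ.SameCycle x y → S x y := by
    intro x y hxy
    obtain ⟨m, hm⟩ := hxy
    have hmem : σ ^ m ∈ H := Subgroup.zpow_mem H memσH m
    have := SmoveH _ hmem x
    rw [hm] at this
    exact Ssymm this
  refine ⟨?_, ?_, ?_⟩
  · intro hsc
    exact main i j k (fun x => Iff.rfl) (sameS hsc)
  · intro hsc
    exact main i k j (fun x => by unfold T; tauto) (sameS hsc)
  · intro hsc
    exact main j k i (fun x => by unfold T; tauto) (sameS hsc)
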